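/- Let g ∈ L¹(ℝ₊) ∩ L²(ℝ₊) and let K be the Volterra convolution operator (K f)(t) = ∫₀ᵗ g(t − τ) f(τ) dτ. Then for every ℓ ∈ ℕ, the Galerkin matrix of K in the Laguerre basis, i.e. the (ℓ+1)×(ℓ+1) matrix with entries (K^ℓ)_{i,j} = ⟨K φ_j, φ_i⟩ = ∫₀^∞ (K φ_j)(t) φ_i(t) dt for 0 ≤ i, j ≤ ℓ, is lower triangular and Toeplitz: (K^ℓ)_{i,j} = 0 when i < j, and (K^ℓ)_{i,j} = ǧ̇_{i−j} when i ≥ j, where ǧ̇_0 = ǧ_0 and ǧ̇_m = ǧ_m − ǧ_{m−1} for m ≥ 1, with ǧ_k = ∫₀^∞ g(t) φ_k(t) dt the Laguerre coefficients of g. -/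

import Mathlib

open MeasureTheory Real

/-- The Laguerre polynomial `L_ℓ(t) = ∑_{j=0}^ℓ (-1)^j (ℓ choose j) t^j / j!`. -/
noncomputable def laguerrePoly (ℓ : ℕ) (t : ℝ) : ℝ :=
  ∑ j ∈ Finset.range (ℓ + 1), (-1 : ℝ) ^ j * (ℓ.choose j) * t ^ j / (j.factorial)

/-- The Laguerre function with parameter `a = 1/2`: `φ_ℓ(t) = e^{-t/2} L_ℓ(t)`. -/
noncomputable def laguerreFun' (ℓ : ℕ) (t : ℝ) : ℝ :=
  Real.exp (-(t / 2)) * laguerrePoly ℓ t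

/-- The Laguerre coefficients of a function `h` on `ℝ₊`: `ȟ_k = ∫₀^∞ h φ_k`. -/
noncomputable def laguerreCoef (h : ℝ → ℝ) (k : ℕ) : ℝ :=
  ∫ t in Set.Ioi (0:ℝ), h t * laguerreFun' k t

/-- The sequence `ǧ̇`: `ǧ̇_0 = ǧ_0` and `ǧ̇_m = ǧ_m − ǧ_{m−1}` for `m ≥ 1`. -/
noncomputable def laguerreCoefDot (g : ℝ → ℝ) : ℕ → ℝ
  | 0 => laguerreCoef g 0
  | (m + 1) => laguerreCoef g (m + 1) - laguerreCoef g m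


section GalerkinAux
open Finset

/-- subset-of-subset identity -/
lemma tri_choose (n j x : ℕ) :
    n.choose (j + x) * (j + x).choose j = n.choose j * (n - j).choose x := by
  by_cases h : j + x ≤ n
  · have hpos : 0 < j.factorial * x.factorial * (n - (j + x)).factorial :=
      Nat.mul_pos (Nat.mul_pos (Nat.factorial_pos _) (Nat.factorial_pos _)) (Nat.factorial_pos _)
    apply Nat.eq_of_mul_eq_mul_right hpos
    have h1 : n.choose (j + x) * (j + x).factorial * (n - (j + x)).factorial = n.factorial :=
      Nat.choose_mul_factorial_mul_factorial h
    have h2 : (j + x).choose j * j.factorial * x.factorial = (j + x).factorial := by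
      have := Nat.choose_mul_factorial_mul_factorial (Nat.le_add_right j x)
      simpa [Nat.add_sub_cancel_left] using this
    have h3 : (n - j).choose x * x.factorial * (n - j - x).factorial = (n - j).factorial :=
      Nat.choose_mul_factorial_mul_factorial (by omega)
    have h4 : n.choose j * j.factorial * (n - j).factorial = n.factorial :=
      Nat.choose_mul_factorial_mul_factorial (by omega)
    have e1 : n - j - x = n - (j + x) := by omega
    calc n.choose (j + x) * (j + x).choose j * (j.factorial * x.factorial * (n - (j+x)).factorial)
        = n.choose (j + x) * ((j + x).choose j * j.factorial * x.factorial) *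
            (n - (j + x)).factorial := by ring
      _ = n.factorial := by rw [h2, ← h1]
      _ = n.choose j * j.factorial * (n - j).factorial := h4.symm
      _ = n.choose j * j.factorial * ((n - j).choose x * x.factorial * (n - j - x).factorial) := by
          rw [h3]
      _ = n.choose j * (n - j).choose x * (j.factorial * x.factorial * (n - (j+x)).factorial) := by
          rw [e1]; ring
  · push_neg at h
    rw [Nat.choose_eq_zero_of_lt h]
    by_cases hj : j ≤ n
    · have : n - j < x := by omega
      rw [Nat.choose_eq_zero_of_lt this]; ring
    · rw [Nat.choose_eq_zero_of_lt (show n < j by omega)]; ring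

/-- delta identity: `∑ s (-1)^s C(s,j) C(n,s) = (-1)^j δ_{nj}` -/
lemma delta_choose (n j : ℕ) :
    ∑ s ∈ range (n + 1), (-1 : ℤ) ^ s * (s.choose j) * (n.choose s)
      = (-1) ^ j * (if n = j then 1 else 0) := by
  by_cases hj : j ≤ n
  · have hsub : ∑ s ∈ range (n + 1), (-1 : ℤ) ^ s * (s.choose j) * (n.choose s)
        = ∑ s ∈ Ico j (n + 1), (-1 : ℤ) ^ s * (s.choose j) * (n.choose s) := by
      rw [range_eq_Ico, ← Finset.sum_Ico_consecutive _ (Nat.zero_le j) (by omega)]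
      have : ∑ s ∈ Ico 0 j, (-1 : ℤ) ^ s * (s.choose j) * (n.choose s) = 0 := by
        apply Finset.sum_eq_zero
        intro s hs
        simp only [mem_Ico] at hs
        rw [Nat.choose_eq_zero_of_lt hs.2]
        simp
      rw [this, zero_add]
    rw [hsub, Finset.sum_Ico_eq_sum_range]
    have : ∀ x, (-1 : ℤ) ^ (j + x) * ((j + x).choose j) * (n.choose (j + x))
        = (-1) ^ j * (n.choose j) * ((-1) ^ x * ((n - j).choose x)) := by
      intro x
      have := tri_choose n j x
      have : ((n.choose (j + x) : ℤ)) * ((j + x).choose j) = (n.choose j) * ((n - j).choose x) := by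
        exact_mod_cast congrArg (Nat.cast : ℕ → ℤ) this
      rw [pow_add]
      linear_combination ((-1:ℤ))^j * ((-1:ℤ))^x * this
    rw [Finset.sum_congr rfl (fun x _ => this x), ← Finset.mul_sum]
    have : n + 1 - j = (n - j) + 1 := by omega
    rw [this, Int.alternating_sum_range_choose]
    by_cases h : n = j
    · subst h; simp
    · have : n - j ≠ 0 := by omega
      simp [if_neg this, if_neg h]
  · rw [if_neg (by omega)]
    rw [Finset.sum_eq_zero, mul_zero]
    intro s hs
    simp only [mem_range] at hs
    rw [Nat.choose_eq_zero_of_lt (by omega)]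
    simp

/-- Alternating Vandermonde-type identity. -/
lemma V_choose (p : ℕ) : ∀ (j r : ℕ),
    ∑ a ∈ range (j + 1), (-1 : ℤ) ^ a * (j.choose a) * ((r + a).choose p)
      = (-1) ^ j * (if j ≤ p then ((r.choose (p - j) : ℤ)) else 0) := by
  intro j
  induction j with
  | zero => intro r; simp
  | succ j ih =>
    intro r
    have hPascal : ∀ x, ((j+1).choose (x+1) : ℤ) = (j.choose x) + (j.choose (x+1)) := by
      intro x; exact_mod_cast congrArg (Nat.cast : ℕ → ℤ) (Nat.choose_succ_succ j x)
    have hstep : ∀ x, (-1 : ℤ) ^ (x+1) * ((j+1).choose (x+1)) * ((r + (x+1)).choose p)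
        = (-1 : ℤ) ^ (x+1) * (j.choose (x+1)) * ((r + (x+1)).choose p)
          - (-1 : ℤ) ^ x * (j.choose x) * (((r+1) + x).choose p) := by
      intro x
      have hA : r + (x+1) = (r+1) + x := by omega
      rw [hA, hPascal x]
      ring
    have key : ∑ a ∈ range (j+2), (-1 : ℤ) ^ a * ((j+1).choose a) * ((r + a).choose p)
        = (∑ a ∈ range (j+2), (-1 : ℤ) ^ a * (j.choose a) * ((r + a).choose p))
          - (∑ a ∈ range (j+1), (-1 : ℤ) ^ a * (j.choose a) * (((r+1) + a).choose p)) := by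
      rw [Finset.sum_range_succ' (fun a => (-1 : ℤ) ^ a * ((j+1).choose a) * ((r + a).choose p)) (j+1),
          Finset.sum_range_succ' (fun a => (-1 : ℤ) ^ a * ((j).choose a) * ((r + a).choose p)) (j+1)]
      simp only [hstep]
      rw [Finset.sum_sub_distrib]
      simp [Nat.choose_zero_right]
      ring
    have htop : ∑ a ∈ range (j+2), (-1 : ℤ) ^ a * (j.choose a) * ((r + a).choose p)
        = ∑ a ∈ range (j+1), (-1 : ℤ) ^ a * (j.choose a) * ((r + a).choose p) := by
      rw [Finset.sum_range_succ, Nat.choose_succ_self]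
      simp
    rw [key, htop, ih r, ih (r+1)]
    by_cases h : j + 1 ≤ p
    · rw [if_pos h, if_pos (by omega), if_pos (by omega)]
      have hps : p - j = (p - (j+1)) + 1 := by omega
      have hpp : ((r+1).choose (p - j) : ℤ) = (r.choose (p - (j+1))) + (r.choose (p - j)) := by
        rw [hps]
        exact_mod_cast congrArg (Nat.cast : ℕ → ℤ) (Nat.choose_succ_succ r (p - (j+1)))
      rw [hpp, hps]
      ring
    · rw [if_neg h]
      by_cases h2 : j ≤ p
      · have hz : p - j = 0 := by omega
        rw [if_pos h2, if_pos h2, hz]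
        simp
      · rw [if_neg h2, if_neg h2]; ring

/-- closed form for the W sum -/
def Rval (i j q : ℕ) : ℤ :=
  if i < j then 0
  else (-1) ^ j * (((i - j).choose q : ℤ) - (if j < i then ((i - j - 1).choose q : ℤ) else 0))

lemma Rval_rec (i j q : ℕ) : Rval (i+1) j (q+1) = Rval i j q + Rval i j (q+1) := by
  unfold Rval
  rcases lt_trichotomy i j with h | h | h
  · by_cases h1 : i + 1 < j
    · simp only [if_pos h1, if_pos h]; ring
    · have hij : i + 1 = j := by omega
      simp only [if_neg h1, if_pos h, if_neg (show ¬ j < i + 1 by omega)]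
      have e : i + 1 - j = 0 := by omega
      rw [e, Nat.choose_zero_succ]
      simp
  · subst h
    simp only [if_neg (show ¬ i + 1 < i by omega), if_neg (lt_irrefl i),
      if_pos (show i < i + 1 by omega)]
    have e1 : i + 1 - i = 1 := by omega
    have e2 : i + 1 - i - 1 = 0 := by omega
    have e3 : i - i = 0 := Nat.sub_self i
    rw [e2, e3, e1]
    have hp : (Nat.choose 1 (q+1) : ℤ) = (Nat.choose 0 q) + (Nat.choose 0 (q+1)) := by
      exact_mod_cast congrArg (Nat.cast : ℕ → ℤ) (Nat.choose_succ_succ 0 q)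
    rw [hp]
    push_cast [Nat.choose_zero_succ]
    ring
  · simp only [if_neg (show ¬ i + 1 < j by omega), if_neg (show ¬ i < j by omega),
      if_pos (show j < i + 1 by omega), if_pos h]
    have e1 : i + 1 - j = (i - j - 1) + 2 := by omega
    have e2 : i - j = (i - j - 1) + 1 := by omega
    have e3 : i + 1 - j - 1 = (i - j - 1) + 1 := by omega
    set m := i - j - 1
    have hp1 : (Nat.choose (m+2) (q+1) : ℤ) = (Nat.choose (m+1) q) + (Nat.choose (m+1) (q+1)) := by
      exact_mod_cast congrArg (Nat.cast : ℕ → ℤ) (Nat.choose_succ_succ (m+1) q)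
    have hp2 : (Nat.choose (m+1) (q+1) : ℤ) = (Nat.choose m q) + (Nat.choose m (q+1)) := by
      exact_mod_cast congrArg (Nat.cast : ℕ → ℤ) (Nat.choose_succ_succ m q)
    rw [e3, e2, e1, hp1, hp2]
    ring

lemma W_choose : ∀ (i j q : ℕ),
    ∑ s ∈ range (i + 1), (-1 : ℤ) ^ s * (s.choose j) * (i.choose (q + s)) = Rval i j q := by
  intro i
  induction i with
  | zero =>
    intro j q
    simp only [zero_add, Finset.sum_range_one, pow_zero, one_mul, Nat.add_zero, Nat.choose_zero_right]
    unfold Rval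
    by_cases hj : j = 0
    · subst hj
      simp only [if_neg (lt_irrefl 0), Nat.choose_zero_right, Nat.cast_one, one_mul, pow_zero]
      simp
    · rw [Nat.choose_eq_zero_of_lt (show 0 < j by omega), if_pos (show 0 < j by omega)]
      norm_num
  | succ i ih =>
    intro j q
    match q with
    | 0 =>
      have hd := delta_choose (i+1) j
      simp only [Nat.zero_add, zero_add] at *
      rw [hd]
      unfold Rval
      by_cases h1 : i + 1 < j
      · rw [if_pos h1, if_neg (show i + 1 ≠ j by omega)]; simp
      · by_cases h2 : i + 1 = j
        · rw [if_neg (show ¬ i + 1 < j by omega), if_pos h2, if_neg (show ¬ j < i + 1 by omega)]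
          rw [show i + 1 - j = 0 from by omega]
          simp
        · rw [if_neg h1, if_neg h2, if_pos (show j < i + 1 by omega)]
          rw [Nat.choose_zero_right, Nat.choose_zero_right]
          simp
    | q + 1 =>
      have hPascal : ∀ s, ((i+1).choose (q + 1 + s) : ℤ)
          = (i.choose (q + s)) + (i.choose (q + 1 + s)) := by
        intro s
        rw [show q + 1 + s = (q + s) + 1 from by omega]
        exact_mod_cast congrArg (Nat.cast : ℕ → ℤ) (Nat.choose_succ_succ i (q + s))
      have hsum : ∑ s ∈ range (i + 2), (-1 : ℤ) ^ s * (s.choose j) * ((i+1).choose (q + 1 + s))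
          = (∑ s ∈ range (i + 2), (-1 : ℤ) ^ s * (s.choose j) * (i.choose (q + s)))
            + (∑ s ∈ range (i + 2), (-1 : ℤ) ^ s * (s.choose j) * (i.choose (q + 1 + s))) := by
        rw [← Finset.sum_add_distrib]
        apply Finset.sum_congr rfl
        intro s _
        rw [hPascal s]; ring
      have htop1 : ∑ s ∈ range (i + 2), (-1 : ℤ) ^ s * (s.choose j) * (i.choose (q + s))
          = ∑ s ∈ range (i + 1), (-1 : ℤ) ^ s * (s.choose j) * (i.choose (q + s)) := by
        rw [Finset.sum_range_succ, Nat.choose_eq_zero_of_lt (show i < q + (i+1) by omega)]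
        simp
      have htop2 : ∑ s ∈ range (i + 2), (-1 : ℤ) ^ s * (s.choose j) * (i.choose (q + 1 + s))
          = ∑ s ∈ range (i + 1), (-1 : ℤ) ^ s * (s.choose j) * (i.choose (q + 1 + s)) := by
        rw [Finset.sum_range_succ, Nat.choose_eq_zero_of_lt (show i < q + 1 + (i+1) by omega)]
        simp
      rw [hsum, htop1, htop2, ih j q, ih j (q+1)]
      exact (Rval_rec i j q).symm


lemma core (i j : ℕ) (u : ℝ) :
    ∑ b ∈ range (i+1), ∑ p ∈ range (b+1), ∑ a ∈ range (j+1),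
      ((-1:ℝ)^a * (j.choose a) / a.factorial) * ((-1:ℝ)^b * (i.choose b) / b.factorial)
        * (b.choose p) * ((a+p).factorial) * u^(b-p)
      = if i < j then 0
        else laguerrePoly (i - j) u - (if j < i then laguerrePoly (i - j - 1) u else 0) := by
  -- Step 1: inner sum over a
  have hA : ∀ p : ℕ, ∑ a ∈ range (j+1),
      ((-1:ℝ)^a * (j.choose a) / a.factorial) * ((a+p).factorial)
      = (-1)^j * (p.choose j) * p.factorial := by
    intro p
    have hterm : ∀ a : ℕ, ((-1:ℝ)^a * (j.choose a) / a.factorial) * ((a+p).factorial)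
        = ((-1:ℝ)^a * (j.choose a) * ((p+a).choose p)) * p.factorial := by
      intro a
      have hn : (p+a).choose p * a.factorial * p.factorial = (a+p).factorial := by
        rw [Nat.add_comm p a]
        exact Nat.add_choose_mul_factorial_mul_factorial a p
      have hfac : ((a+p).factorial : ℝ)
          = ((p+a).choose p : ℝ) * a.factorial * p.factorial := by
        exact_mod_cast (congrArg (Nat.cast : ℕ → ℝ) hn.symm)
      rw [hfac]
      have ha : (a.factorial : ℝ) ≠ 0 := by exact_mod_cast a.factorial_ne_zero
      field_simp
    rw [Finset.sum_congr rfl (fun a _ => hterm a), ← Finset.sum_mul]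
    have hZ := V_choose p j p
    have hcastL : ∑ a ∈ range (j+1), (-1:ℝ)^a * (j.choose a) * ((p+a).choose p)
        = ((∑ a ∈ range (j+1), (-1:ℤ)^a * (j.choose a) * ((p+a).choose p) : ℤ) : ℝ) := by
      push_cast
      rfl
    rw [hcastL, hZ]
    by_cases h : j ≤ p
    · rw [if_pos h]
      have : (p.choose (p-j)) = p.choose j := Nat.choose_symm h
      rw [this]
      push_cast
      ring
    · rw [if_neg h, Nat.choose_eq_zero_of_lt (by omega)]
      push_cast
      ring
  -- apply hA to collapse the a-sum
  have step1 : ∀ b ∈ range (i+1), ∀ p ∈ range (b+1),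
      ∑ a ∈ range (j+1),
        ((-1:ℝ)^a * (j.choose a) / a.factorial) * ((-1:ℝ)^b * (i.choose b) / b.factorial)
          * (b.choose p) * ((a+p).factorial) * u^(b-p)
      = (-1:ℝ)^b * (-1)^j * (i.choose b) * ((p.choose j) * u^(b-p) / (b-p).factorial) := by
    intro b _ p hp
    simp only [mem_range] at hp
    have hpb : p ≤ b := by omega
    have h1 : ∑ a ∈ range (j+1),
        ((-1:ℝ)^a * (j.choose a) / a.factorial) * ((-1:ℝ)^b * (i.choose b) / b.factorial)
          * (b.choose p) * ((a+p).factorial) * u^(b-p)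
        = (∑ a ∈ range (j+1), ((-1:ℝ)^a * (j.choose a) / a.factorial) * ((a+p).factorial))
          * (((-1:ℝ)^b * (i.choose b) / b.factorial) * (b.choose p) * u^(b-p)) := by
      rw [Finset.sum_mul]
      apply Finset.sum_congr rfl
      intro a _
      ring
    rw [h1, hA p]
    -- use b.choose p * p! * (b-p)! = b!
    have hb : (b.factorial : ℝ) = (b.choose p : ℝ) * p.factorial * (b-p).factorial := by
      exact_mod_cast (congrArg (Nat.cast : ℕ → ℝ)
        (Nat.choose_mul_factorial_mul_factorial hpb).symm)
    rw [hb]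
    have h2 : ((b.choose p : ℝ)) ≠ 0 := by
      exact_mod_cast Nat.choose_pos hpb |>.ne'
    have h3 : (p.factorial : ℝ) ≠ 0 := by exact_mod_cast p.factorial_ne_zero
    have h4 : ((b-p).factorial : ℝ) ≠ 0 := by exact_mod_cast (b-p).factorial_ne_zero
    field_simp
  rw [Finset.sum_congr rfl (fun b hb => Finset.sum_congr rfl (fun p hp => step1 b hb p hp))]
  -- Step 2: reflect the p-sum
  have step2 : ∀ b ∈ range (i+1),
      ∑ p ∈ range (b+1),
        (-1:ℝ)^b * (-1)^j * (i.choose b) * ((p.choose j) * u^(b-p) / (b-p).factorial)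
      = ∑ q ∈ range (b+1),
        (-1:ℝ)^b * (-1)^j * (i.choose b) * (((b-q).choose j) * u^q / q.factorial) := by
    intro b _
    have := Finset.sum_range_reflect
      (fun q => (-1:ℝ)^b * (-1)^j * (i.choose b) * (((b-q).choose j) * u^q / q.factorial)) (b+1)
    rw [← this]
    apply Finset.sum_congr rfl
    intro p hp
    simp only [mem_range] at hp
    have e1 : b + 1 - 1 - p = b - p := by omega
    have e2 : b - (b - p) = p := by omega
    rw [e1, e2]
  rw [Finset.sum_congr rfl step2]
  -- Step 3: triangle swap
  have step3 : ∑ b ∈ range (i+1), ∑ q ∈ range (b+1),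
        (-1:ℝ)^b * (-1)^j * (i.choose b) * (((b-q).choose j) * u^q / q.factorial)
      = ∑ q ∈ range (i+1), ∑ b ∈ Ico q (i+1),
        (-1:ℝ)^b * (-1)^j * (i.choose b) * (((b-q).choose j) * u^q / q.factorial) := by
    simp only [Finset.range_eq_Ico]
    rw [← Finset.sum_Ico_Ico_comm 0 (i+1)
      (fun q b => (-1:ℝ)^b * (-1)^j * (i.choose b) * (((b-q).choose j) * u^q / q.factorial))]
  rw [step3]
  -- Step 4: the b-sum via W_choose
  have step4 : ∀ q ∈ range (i+1),
      ∑ b ∈ Ico q (i+1),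
        (-1:ℝ)^b * (-1)^j * (i.choose b) * (((b-q).choose j) * u^q / q.factorial)
      = ((Rval i j q : ℤ) : ℝ) * (-1)^q * (-1)^j * u^q / q.factorial := by
    intro q hq
    simp only [mem_range] at hq
    rw [Finset.sum_Ico_eq_sum_range]
    have hterm : ∀ s ∈ range (i + 1 - q),
        (-1:ℝ)^(q+s) * (-1)^j * (i.choose (q+s)) * (((q+s-q).choose j) * u^q / q.factorial)
        = ((-1:ℝ)^s * (s.choose j) * (i.choose (q+s))) * ((-1)^q * (-1)^j * u^q / q.factorial) := by
      intro s _
      have e : q + s - q = s := by omega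
      rw [e, pow_add]
      ring
    rw [Finset.sum_congr rfl hterm, ← Finset.sum_mul]
    have hext : ∑ s ∈ range (i + 1 - q), (-1:ℝ)^s * (s.choose j) * (i.choose (q+s))
        = ∑ s ∈ range (i + 1), (-1:ℝ)^s * (s.choose j) * (i.choose (q+s)) := by
      apply Finset.sum_subset
      · apply Finset.range_subset_range.2; omega
      · intro s _ hs
        simp only [mem_range] at hs
        rw [Nat.choose_eq_zero_of_lt (show i < q + s by omega)]
        simp
    rw [hext]
    have hcast : ∑ s ∈ range (i+1), (-1:ℝ)^s * (s.choose j) * (i.choose (q+s))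
        = ((∑ s ∈ range (i+1), (-1:ℤ)^s * (s.choose j) * (i.choose (q+s)) : ℤ) : ℝ) := by
      push_cast
      rfl
    rw [hcast, W_choose i j q]
    ring
  rw [Finset.sum_congr rfl step4]
  -- Step 5: final evaluation
  by_cases h : i < j
  · rw [if_pos h]
    apply Finset.sum_eq_zero
    intro q _
    unfold Rval
    rw [if_pos h]
    simp
  · rw [if_neg h]
    have hji : j ≤ i := by omega
    have hRval : ∀ q, ((Rval i j q : ℤ) : ℝ)
        = (-1)^j * (((i-j).choose q : ℝ) - (if j < i then (((i-j-1).choose q : ℕ) : ℝ) else 0)) := by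
      intro q
      unfold Rval
      rw [if_neg h]
      by_cases hji2 : j < i
      · rw [if_pos hji2, if_pos hji2]; push_cast; ring
      · rw [if_neg hji2, if_neg hji2]; push_cast; ring
    have hterm2 : ∀ q ∈ range (i+1),
        ((Rval i j q : ℤ) : ℝ) * (-1)^q * (-1)^j * u^q / q.factorial
        = ((-1:ℝ)^q * ((i-j).choose q) * u^q / q.factorial)
          - (if j < i then ((-1:ℝ)^q * ((i-j-1).choose q) * u^q / q.factorial) else 0) := by
      intro q _
      rw [hRval q]
      by_cases hji2 : j < i
      · rw [if_pos hji2, if_pos hji2]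
        have h1 : ((-1:ℝ)^j) * ((-1:ℝ)^j) = 1 := by
          rw [← pow_add]
          exact Even.neg_one_pow ⟨j, rfl⟩
        linear_combination ((-1:ℝ)^q * ((((i-j).choose q : ℕ) : ℝ)
          - (((i-j-1).choose q : ℕ) : ℝ)) * u^q / (q.factorial : ℝ)) * h1
      · rw [if_neg hji2, if_neg hji2]
        have h1 : ((-1:ℝ)^j) * ((-1:ℝ)^j) = 1 := by
          rw [← pow_add]
          exact Even.neg_one_pow ⟨j, rfl⟩
        linear_combination ((-1:ℝ)^q * (((i-j).choose q : ℕ) : ℝ)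
          * u^q / (q.factorial : ℝ)) * h1
    rw [Finset.sum_congr rfl hterm2, Finset.sum_sub_distrib]
    have hL1 : ∑ q ∈ range (i+1), (-1:ℝ)^q * ((i-j).choose q) * u^q / q.factorial
        = laguerrePoly (i-j) u := by
      unfold laguerrePoly
      symm
      apply Finset.sum_subset
      · apply Finset.range_subset_range.2; omega
      · intro q _ hq
        simp only [mem_range] at hq
        rw [Nat.choose_eq_zero_of_lt (by omega)]
        simp
    rw [hL1]
    congr 1
    by_cases hji2 : j < i
    · simp only [if_pos hji2]
      unfold laguerrePoly
      symm
      apply Finset.sum_subset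
      · apply Finset.range_subset_range.2; omega
      · intro q _ hq
        simp only [mem_range] at hq
        rw [Nat.choose_eq_zero_of_lt (by omega)]
        simp
    · simp only [if_neg hji2]
      simp


open MeasureTheory Set in
lemma integrableOn_exp_neg_pow (n : ℕ) :
    IntegrableOn (fun τ : ℝ => Real.exp (-τ) * τ ^ n) (Set.Ioi 0) := by
  have h := Real.GammaIntegral_convergent (show (0:ℝ) < n + 1 by positivity)
  apply h.congr_fun _ measurableSet_Ioi
  intro x hx
  simp only [Set.mem_Ioi] at hx
  simp only [show ((n:ℝ) + 1 - 1) = (n:ℝ) by ring, Real.rpow_natCast]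

open MeasureTheory Set in
lemma integral_exp_neg_pow (n : ℕ) :
    ∫ τ in Set.Ioi (0:ℝ), Real.exp (-τ) * τ ^ n = n.factorial := by
  have h := (Real.Gamma_eq_integral (show (0:ℝ) < n + 1 by positivity)).symm
  have h2 : ∫ x in Set.Ioi (0:ℝ), Real.exp (-x) * x ^ ((n:ℝ) + 1 - 1)
      = ∫ τ in Set.Ioi (0:ℝ), Real.exp (-τ) * τ ^ n := by
    apply setIntegral_congr_fun measurableSet_Ioi
    intro x hx
    simp only [Set.mem_Ioi] at hx
    simp only [show ((n:ℝ) + 1 - 1) = (n:ℝ) by ring, Real.rpow_natCast]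
  rw [← h2, h]
  exact_mod_cast Real.Gamma_nat_eq_factorial n

open MeasureTheory Set in
lemma corr (i j : ℕ) (u : ℝ) :
    ∫ τ in Set.Ioi (0:ℝ), laguerreFun' j τ * laguerreFun' i (u + τ)
      = if i < j then 0
        else Real.exp (-(u/2)) *
          (laguerrePoly (i-j) u - if j < i then laguerrePoly (i-j-1) u else 0) := by
  have expand : ∀ τ : ℝ, laguerreFun' j τ * laguerreFun' i (u + τ)
      = ∑ b ∈ Finset.range (i+1), ∑ p ∈ Finset.range (b+1), ∑ a ∈ Finset.range (j+1),
        (((-1:ℝ)^a * (j.choose a) / a.factorial) * ((-1:ℝ)^b * (i.choose b) / b.factorial)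
          * (b.choose p) * u^(b-p) * Real.exp (-(u/2))) * (Real.exp (-τ) * τ^(a+p)) := by
    intro τ
    have hexp : Real.exp (-(τ/2)) * Real.exp (-((u+τ)/2))
        = Real.exp (-(u/2)) * Real.exp (-τ) := by
      rw [← Real.exp_add, ← Real.exp_add]
      congr 1
      ring
    have h1 : laguerreFun' j τ * laguerreFun' i (u + τ)
        = (Real.exp (-(u/2)) * Real.exp (-τ)) * (laguerrePoly j τ * laguerrePoly i (u+τ)) := by
      unfold laguerreFun'
      linear_combination (laguerrePoly j τ * laguerrePoly i (u+τ)) * hexp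
    rw [h1]
    unfold laguerrePoly
    rw [Finset.sum_mul_sum, Finset.mul_sum]
    have hstep : ∀ a ∈ Finset.range (j+1),
        (Real.exp (-(u/2)) * Real.exp (-τ)) *
          ∑ b ∈ Finset.range (i+1),
            ((-1:ℝ)^a * (j.choose a) * τ^a / a.factorial *
              ((-1:ℝ)^b * (i.choose b) * (u+τ)^b / b.factorial))
        = ∑ b ∈ Finset.range (i+1),
            (Real.exp (-(u/2)) * Real.exp (-τ)) *
              ((-1:ℝ)^a * (j.choose a) * τ^a / a.factorial *
                ((-1:ℝ)^b * (i.choose b) * (u+τ)^b / b.factorial)) := by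
      intro a _
      rw [Finset.mul_sum]
    rw [Finset.sum_congr rfl hstep, Finset.sum_comm]
    apply Finset.sum_congr rfl
    intro b _
    have hb : (u + τ)^b = ∑ p ∈ Finset.range (b+1), τ^p * u^(b-p) * (b.choose p) := by
      rw [add_comm u τ, add_pow]
    calc ∑ a ∈ Finset.range (j+1),
          (Real.exp (-(u/2)) * Real.exp (-τ)) *
            ((-1:ℝ)^a * (j.choose a) * τ^a / a.factorial *
              ((-1:ℝ)^b * (i.choose b) * (u+τ)^b / b.factorial))
        = ∑ a ∈ Finset.range (j+1), ∑ p ∈ Finset.range (b+1),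
          (((-1:ℝ)^a * (j.choose a) / a.factorial) * ((-1:ℝ)^b * (i.choose b) / b.factorial)
            * (b.choose p) * u^(b-p) * Real.exp (-(u/2))) * (Real.exp (-τ) * τ^(a+p)) := by
          apply Finset.sum_congr rfl
          intro a _
          rw [hb, Finset.mul_sum, Finset.sum_div, Finset.mul_sum, Finset.mul_sum]
          apply Finset.sum_congr rfl
          intro p _
          rw [pow_add]
          ring
      _ = ∑ p ∈ Finset.range (b+1), ∑ a ∈ Finset.range (j+1),
          (((-1:ℝ)^a * (j.choose a) / a.factorial) * ((-1:ℝ)^b * (i.choose b) / b.factorial)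
            * (b.choose p) * u^(b-p) * Real.exp (-(u/2))) * (Real.exp (-τ) * τ^(a+p)) :=
          Finset.sum_comm
  rw [show (fun τ => laguerreFun' j τ * laguerreFun' i (u + τ))
      = fun τ => ∑ b ∈ Finset.range (i+1), ∑ p ∈ Finset.range (b+1), ∑ a ∈ Finset.range (j+1),
        (((-1:ℝ)^a * (j.choose a) / a.factorial) * ((-1:ℝ)^b * (i.choose b) / b.factorial)
          * (b.choose p) * u^(b-p) * Real.exp (-(u/2))) * (Real.exp (-τ) * τ^(a+p))
    from funext expand]
  have hint : ∀ (c : ℝ) (n : ℕ),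
      Integrable (fun τ : ℝ => c * (Real.exp (-τ) * τ^n)) (volume.restrict (Set.Ioi 0)) :=
    fun c n => (integrableOn_exp_neg_pow n).const_mul c
  rw [integral_finset_sum _ (fun b _ => by
    apply integrable_finset_sum
    intro p _
    apply integrable_finset_sum
    intro a _
    exact hint _ _)]
  have h3 : ∀ b ∈ Finset.range (i+1),
      (∫ τ in Set.Ioi (0:ℝ), ∑ p ∈ Finset.range (b+1), ∑ a ∈ Finset.range (j+1),
        (((-1:ℝ)^a * (j.choose a) / a.factorial) * ((-1:ℝ)^b * (i.choose b) / b.factorial)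
          * (b.choose p) * u^(b-p) * Real.exp (-(u/2))) * (Real.exp (-τ) * τ^(a+p)))
      = ∑ p ∈ Finset.range (b+1), ∑ a ∈ Finset.range (j+1),
        Real.exp (-(u/2)) *
          (((-1:ℝ)^a * (j.choose a) / a.factorial) * ((-1:ℝ)^b * (i.choose b) / b.factorial)
            * (b.choose p) * ((a+p).factorial) * u^(b-p)) := by
    intro b _
    rw [integral_finset_sum _ (fun p _ => by
      apply integrable_finset_sum
      intro a _
      exact hint _ _)]
    apply Finset.sum_congr rfl
    intro p _
    rw [integral_finset_sum _ (fun a _ => hint _ _)]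
    apply Finset.sum_congr rfl
    intro a _
    rw [integral_const_mul, integral_exp_neg_pow]
    ring
  rw [Finset.sum_congr rfl h3]
  have h4 : ∑ b ∈ Finset.range (i+1), ∑ p ∈ Finset.range (b+1), ∑ a ∈ Finset.range (j+1),
      Real.exp (-(u/2)) *
        (((-1:ℝ)^a * (j.choose a) / a.factorial) * ((-1:ℝ)^b * (i.choose b) / b.factorial)
          * (b.choose p) * ((a+p).factorial) * u^(b-p))
      = Real.exp (-(u/2)) *
        ∑ b ∈ Finset.range (i+1), ∑ p ∈ Finset.range (b+1), ∑ a ∈ Finset.range (j+1),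
          ((-1:ℝ)^a * (j.choose a) / a.factorial) * ((-1:ℝ)^b * (i.choose b) / b.factorial)
            * (b.choose p) * ((a+p).factorial) * u^(b-p) := by
    rw [Finset.mul_sum]
    apply Finset.sum_congr rfl
    intro b _
    rw [Finset.mul_sum]
    apply Finset.sum_congr rfl
    intro p _
    rw [Finset.mul_sum]
  rw [h4, core i j u]
  by_cases h : i < j
  · rw [if_pos h, if_pos h, mul_zero]
  · rw [if_neg h, if_neg h]

lemma pow_mul_exp_half_le (n : ℕ) (t : ℝ) (ht : 0 ≤ t) :
    t^n * Real.exp (-(t/2)) ≤ (n.factorial * 4^n) * Real.exp (-(t/4)) := by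
  have h1 : (t/4)^n / (n.factorial : ℝ) ≤ Real.exp (t/4) :=
    Real.pow_div_factorial_le_exp (x := t/4) (by positivity) n
  have hfn : (n.factorial : ℝ) ≠ 0 := by exact_mod_cast n.factorial_ne_zero
  have key : ((t/4)^n / (n.factorial:ℝ)) * ((n.factorial:ℝ) * 4^n * Real.exp (-(t/2)))
      = t^n * Real.exp (-(t/2)) := by
    field_simp
    rw [← mul_pow]; norm_num
  have e : Real.exp (t/4) * Real.exp (-(t/2)) = Real.exp (-(t/4)) := by
    rw [← Real.exp_add]; congr 1; ring
  calc t^n * Real.exp (-(t/2))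
      = ((t/4)^n / (n.factorial:ℝ)) * ((n.factorial:ℝ) * 4^n * Real.exp (-(t/2))) := key.symm
    _ ≤ Real.exp (t/4) * ((n.factorial:ℝ) * 4^n * Real.exp (-(t/2))) := by
        apply mul_le_mul_of_nonneg_right h1
        positivity
    _ = ((n.factorial : ℝ) * 4^n) * (Real.exp (t/4) * Real.exp (-(t/2))) := by ring
    _ = (n.factorial * 4^n) * Real.exp (-(t/4)) := by rw [e]

lemma phi_exp_bound (ℓ : ℕ) : ∃ C : ℝ, 0 ≤ C ∧
    ∀ t : ℝ, 0 ≤ t → |laguerreFun' ℓ t| ≤ C * Real.exp (-(t/4)) := by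
  refine ⟨∑ k ∈ Finset.range (ℓ+1), (ℓ.choose k : ℝ) * 4^k, by positivity, ?_⟩
  intro t ht
  have h0 : |laguerreFun' ℓ t|
      ≤ ∑ k ∈ Finset.range (ℓ+1), ((ℓ.choose k:ℝ)/k.factorial) * (t^k * Real.exp (-(t/2))) := by
    unfold laguerreFun' laguerrePoly
    rw [abs_mul, Real.abs_exp]
    calc Real.exp (-(t/2)) * |∑ k ∈ Finset.range (ℓ+1), (-1:ℝ)^k * (ℓ.choose k) * t^k / k.factorial|
        ≤ Real.exp (-(t/2)) *
          ∑ k ∈ Finset.range (ℓ+1), |(-1:ℝ)^k * (ℓ.choose k) * t^k / k.factorial| := by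
          apply mul_le_mul_of_nonneg_left (Finset.abs_sum_le_sum_abs _ _) (Real.exp_nonneg _)
      _ = ∑ k ∈ Finset.range (ℓ+1), ((ℓ.choose k:ℝ)/k.factorial) * (t^k * Real.exp (-(t/2))) := by
          rw [Finset.mul_sum]
          apply Finset.sum_congr rfl
          intro k _
          rw [abs_div, abs_mul, abs_mul, abs_pow, abs_neg, abs_one, one_pow, one_mul,
            Nat.abs_cast, Nat.abs_cast, abs_of_nonneg (pow_nonneg ht k)]
          ring
  refine h0.trans ?_
  rw [Finset.sum_mul]
  apply Finset.sum_le_sum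
  intro k _
  have hb := pow_mul_exp_half_le k t ht
  have hc : (0:ℝ) ≤ (ℓ.choose k:ℝ)/k.factorial := by positivity
  calc ((ℓ.choose k:ℝ)/k.factorial) * (t^k * Real.exp (-(t/2)))
      ≤ ((ℓ.choose k:ℝ)/k.factorial) * ((k.factorial * 4^k) * Real.exp (-(t/4))) :=
        mul_le_mul_of_nonneg_left hb hc
    _ = (ℓ.choose k : ℝ) * 4^k * Real.exp (-(t/4)) := by
        have : (k.factorial : ℝ) ≠ 0 := by exact_mod_cast k.factorial_ne_zero
        field_simp

lemma continuous_laguerreFun' (ℓ : ℕ) : Continuous (laguerreFun' ℓ) := by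
  unfold laguerreFun' laguerrePoly
  apply Continuous.mul
  · exact Real.continuous_exp.comp (by continuity)
  · apply continuous_finset_sum
    intro k _
    continuity

open MeasureTheory in
lemma integral_Ioi_shift (F : ℝ → ℝ) (σ : ℝ) :
    ∫ t in Set.Ioi σ, F t = ∫ τ in Set.Ioi (0:ℝ), F (τ + σ) := by
  rw [← integral_indicator measurableSet_Ioi, ← integral_indicator measurableSet_Ioi]
  rw [← integral_add_right_eq_self (fun t => (Set.Ioi σ).indicator F t) σ]
  congr 1
  funext x
  by_cases hx : 0 < x
  · rw [Set.indicator_of_mem (by simp only [Set.mem_Ioi]; linarith : x + σ ∈ Set.Ioi σ),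
      Set.indicator_of_mem (by simpa using hx : x ∈ Set.Ioi (0:ℝ))]
  · rw [Set.indicator_of_notMem (by simp only [Set.mem_Ioi]; intro h; exact hx (by linarith)),
      Set.indicator_of_notMem (by simpa using hx)]



open MeasureTheory in
lemma integrable_g_phi (g : ℝ → ℝ) (hg1 : IntegrableOn g (Set.Ioi 0)) (k : ℕ) :
    IntegrableOn (fun σ => g σ * laguerreFun' k σ) (Set.Ioi 0) := by
  obtain ⟨C, hC0, hC⟩ := phi_exp_bound k
  apply Integrable.mono (hg1.abs.const_mul C)
  · exact hg1.aestronglyMeasurable.mul (continuous_laguerreFun' k).aestronglyMeasurable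
  · filter_upwards [ae_restrict_mem measurableSet_Ioi] with σ hσ
    rw [Set.mem_Ioi] at hσ
    rw [Real.norm_eq_abs, Real.norm_eq_abs, abs_mul]
    have h1 : |laguerreFun' k σ| ≤ C := by
      refine (hC σ (le_of_lt hσ)).trans ?_
      calc C * Real.exp (-(σ/4)) ≤ C * 1 := by
            apply mul_le_mul_of_nonneg_left _ hC0
            rw [Real.exp_le_one_iff]
            linarith
        _ = C := mul_one C
    have h2 : abs (g σ) * abs (laguerreFun' k σ) ≤ C * abs (g σ) := by
      rw [mul_comm C]
      exact mul_le_mul_of_nonneg_left h1 (abs_nonneg _)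
    exact h2.trans (le_abs_self _)

noncomputable def uAux (g : ℝ → ℝ) (J I : ℕ) (t σ : ℝ) : ℝ :=
  if σ < t then g σ * laguerreFun' J (t - σ) * laguerreFun' I t else 0

set_option maxHeartbeats 1000000 in
open MeasureTheory in
lemma main_aux (g : ℝ → ℝ) (hg1 : IntegrableOn g (Set.Ioi 0)) (I J : ℕ) :
    (∫ t in Set.Ioi (0:ℝ),
        (∫ τ in (0:ℝ)..t, g (t - τ) * laguerreFun' J τ) * laguerreFun' I t)
      = if I < J then 0 else laguerreCoefDot g (I - J) := by
  obtain ⟨Cj, hCj0, hCj⟩ := phi_exp_bound J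
  obtain ⟨Ci, hCi0, hCi⟩ := phi_exp_bound I
  set u : ℝ → ℝ → ℝ := uAux g J I with hu
  -- Step A : rewrite inner integral
  have stepA : ∀ t ∈ Set.Ioi (0:ℝ),
      (∫ τ in (0:ℝ)..t, g (t - τ) * laguerreFun' J τ) * laguerreFun' I t
      = ∫ σ in Set.Ioi (0:ℝ), u t σ := by
    intro t ht
    rw [Set.mem_Ioi] at ht
    have h1 : (∫ τ in (0:ℝ)..t, g (t - τ) * laguerreFun' J τ)
        = ∫ σ in (0:ℝ)..t, g σ * laguerreFun' J (t - σ) := by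
      calc (∫ τ in (0:ℝ)..t, g (t - τ) * laguerreFun' J τ)
          = ∫ τ in (0:ℝ)..t, (fun σ => g σ * laguerreFun' J (t - σ)) (t - τ) := by
            apply intervalIntegral.integral_congr
            intro τ _
            simp only []
            rw [sub_sub_cancel]
        _ = ∫ σ in (t - t)..(t - 0), (fun σ => g σ * laguerreFun' J (t - σ)) σ := by
            exact intervalIntegral.integral_comp_sub_left (fun σ => g σ * laguerreFun' J (t - σ)) t
        _ = ∫ σ in (0:ℝ)..t, g σ * laguerreFun' J (t - σ) := by rw [sub_self, sub_zero]
    have h2 : ∫ σ in (0:ℝ)..t, g σ * laguerreFun' J (t - σ)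
        = ∫ σ in Set.Ioi (0:ℝ), (if σ < t then g σ * laguerreFun' J (t - σ) else 0) := by
      rw [intervalIntegral.integral_of_le (le_of_lt ht), integral_Ioc_eq_integral_Ioo]
      have h3 : ∫ σ in Set.Ioi (0:ℝ), (if σ < t then g σ * laguerreFun' J (t - σ) else 0)
          = ∫ σ in Set.Ioi (0:ℝ),
              (Set.Iio t).indicator (fun σ => g σ * laguerreFun' J (t - σ)) σ := by
        apply setIntegral_congr_fun measurableSet_Ioi
        intro σ _
        simp [Set.indicator_apply]
      rw [h3, setIntegral_indicator measurableSet_Iio, Set.Ioi_inter_Iio]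
    rw [h1, h2, ← integral_mul_const]
    apply setIntegral_congr_fun measurableSet_Ioi
    intro σ _
    simp only [hu, uAux]
    split_ifs with h
    · rfl
    · rw [zero_mul]
  rw [setIntegral_congr_fun measurableSet_Ioi stepA]
  -- Step B : Fubini
  have hmeas : AEStronglyMeasurable (Function.uncurry u)
      ((volume.restrict (Set.Ioi 0)).prod (volume.restrict (Set.Ioi (0:ℝ)))) := by
    have he : Function.uncurry u = Set.indicator {p : ℝ × ℝ | p.2 < p.1}
        (fun p => g p.2 * laguerreFun' J (p.1 - p.2) * laguerreFun' I p.1) := by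
      funext p
      cases p with
      | mk t σ => simp only [Function.uncurry, Set.indicator_apply, Set.mem_setOf_eq, hu, uAux]
    rw [he]
    apply AEStronglyMeasurable.indicator
    · apply AEStronglyMeasurable.mul
      · apply AEStronglyMeasurable.mul
        · exact (hg1.aestronglyMeasurable).comp_snd
        · exact ((continuous_laguerreFun' J).comp
            (continuous_fst.sub continuous_snd)).aestronglyMeasurable
      · exact ((continuous_laguerreFun' I).comp continuous_fst).aestronglyMeasurable
    · exact measurableSet_lt measurable_snd measurable_fst
  have hintg : Integrable (Function.uncurry u)
      ((volume.restrict (Set.Ioi 0)).prod (volume.restrict (Set.Ioi (0:ℝ)))) := by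
    have hexp4 : IntegrableOn (fun t : ℝ => Real.exp (-(t/4))) (Set.Ioi 0) := by
      have h := exp_neg_integrableOn_Ioi 0 (show (0:ℝ) < 1/4 by norm_num)
      have he : (fun t : ℝ => Real.exp (-(t/4))) = (fun t : ℝ => Real.exp (-(1/4 : ℝ) * t)) := by
        funext t
        congr 1
        ring
      rw [he]
      exact h
    have hD : Integrable (fun p : ℝ × ℝ => (Cj * Ci) * (Real.exp (-(p.1/4)) * |g p.2|))
        ((volume.restrict (Set.Ioi 0)).prod (volume.restrict (Set.Ioi (0:ℝ)))) := by
      apply Integrable.const_mul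
      exact Integrable.mul_prod hexp4 hg1.abs
    apply Integrable.mono hD hmeas
    rw [Measure.prod_restrict]
    filter_upwards [ae_restrict_mem (measurableSet_Ioi.prod measurableSet_Ioi)] with p hp
    obtain ⟨hp1, hp2⟩ := hp
    rw [Set.mem_Ioi] at hp1 hp2
    rcases p with ⟨t, σ⟩
    simp only [Function.uncurry, hu, uAux]
    rw [Real.norm_eq_abs, Real.norm_eq_abs,
      abs_of_nonneg (show (0:ℝ) ≤ (Cj * Ci) * (Real.exp (-(t/4)) * |g σ|) by positivity)]
    split_ifs with hlt
    · have b1 : |laguerreFun' J (t - σ)| ≤ Cj := by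
        refine (hCj (t - σ) (by linarith)).trans ?_
        calc Cj * Real.exp (-((t-σ)/4)) ≤ Cj * 1 := by
              apply mul_le_mul_of_nonneg_left _ hCj0
              rw [Real.exp_le_one_iff]
              linarith
          _ = Cj := mul_one Cj
      have b2 : |laguerreFun' I t| ≤ Ci * Real.exp (-(t/4)) := hCi t (le_of_lt hp1)
      calc |g σ * laguerreFun' J (t - σ) * laguerreFun' I t|
          = (|g σ| * |laguerreFun' J (t - σ)|) * |laguerreFun' I t| := by
            rw [abs_mul, abs_mul]
        _ ≤ (|g σ| * Cj) * (Ci * Real.exp (-(t/4))) := by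
            apply mul_le_mul (mul_le_mul_of_nonneg_left b1 (abs_nonneg _)) b2 (abs_nonneg _)
            positivity
        _ = (Cj * Ci) * (Real.exp (-(t/4)) * |g σ|) := by ring
    · rw [abs_zero]
      positivity
  rw [integral_integral_swap hintg]
  -- Step C : inner integral in t
  have stepC : ∀ σ ∈ Set.Ioi (0:ℝ),
      (∫ t in Set.Ioi (0:ℝ), u t σ)
      = g σ * (if I < J then 0
          else Real.exp (-(σ/2)) *
            (laguerrePoly (I-J) σ - if J < I then laguerrePoly (I-J-1) σ else 0)) := by
    intro σ hσ
    rw [Set.mem_Ioi] at hσ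
    have h1 : ∫ t in Set.Ioi (0:ℝ), u t σ
        = ∫ t in Set.Ioi (0:ℝ),
            (Set.Ioi σ).indicator (fun t => g σ * laguerreFun' J (t - σ) * laguerreFun' I t) t := by
      apply setIntegral_congr_fun measurableSet_Ioi
      intro t _
      simp only [hu, uAux, Set.indicator_apply, Set.mem_Ioi]
    rw [h1, setIntegral_indicator measurableSet_Ioi,
      show Set.Ioi (0:ℝ) ∩ Set.Ioi σ = Set.Ioi σ from by
        rw [Set.Ioi_inter_Ioi, max_eq_right (le_of_lt hσ)],
      integral_Ioi_shift (fun t => g σ * laguerreFun' J (t - σ) * laguerreFun' I t) σ]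
    have h2 : ∫ τ in Set.Ioi (0:ℝ),
          (fun t => g σ * laguerreFun' J (t - σ) * laguerreFun' I t) (τ + σ)
        = ∫ τ in Set.Ioi (0:ℝ), g σ * (laguerreFun' J τ * laguerreFun' I (σ + τ)) := by
      apply setIntegral_congr_fun measurableSet_Ioi
      intro τ _
      simp only []
      rw [add_sub_cancel_right, add_comm τ σ, mul_assoc]
    rw [h2, integral_const_mul, corr I J σ]
  rw [setIntegral_congr_fun measurableSet_Ioi stepC]
  -- Step D : conclude
  by_cases hIJ : I < J
  · simp only [if_pos hIJ, mul_zero, integral_zero]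
  · simp only [if_neg hIJ]
    by_cases hJI : J < I
    · simp only [if_pos hJI]
      have h3 : ∀ σ ∈ Set.Ioi (0:ℝ),
          g σ * (Real.exp (-(σ/2)) * (laguerrePoly (I-J) σ - laguerrePoly (I-J-1) σ))
          = g σ * laguerreFun' (I-J) σ - g σ * laguerreFun' (I-J-1) σ := by
        intro σ _
        unfold laguerreFun'
        ring
      rw [setIntegral_congr_fun measurableSet_Ioi h3,
        integral_sub (integrable_g_phi g hg1 (I-J)) (integrable_g_phi g hg1 (I-J-1))]
      rw [show I - J = (I - J - 1) + 1 from by omega]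
      rw [show I - J - 1 + 1 - 1 = I - J - 1 from by omega]
      rfl
    · simp only [if_neg hJI]
      have hEq : I - J = 0 := by omega
      rw [hEq]
      have h3 : ∀ σ ∈ Set.Ioi (0:ℝ),
          g σ * (Real.exp (-(σ/2)) * (laguerrePoly 0 σ - 0))
          = g σ * laguerreFun' 0 σ := by
        intro σ _
        unfold laguerreFun'
        ring
      rw [setIntegral_congr_fun measurableSet_Ioi h3]
      rfl

end GalerkinAux

/-- For `g ∈ L¹(ℝ₊) ∩ L²(ℝ₊)` and `K` the Volterra convolution operator
`(K f)(t) = ∫₀ᵗ g(t−τ) f(τ) dτ`, the Galerkin matrix of `K` in the Laguerre basis is lower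
triangular Toeplitz, with entries `⟨K φ_j, φ_i⟩ = ǧ̇_{i−j}` for `i ≥ j` and `0` for `i < j`. -/
theorem galerkin_matrix_lower_triangular_toeplitz
    (g : ℝ → ℝ) (hg1 : IntegrableOn g (Set.Ioi 0))
    (hg2 : MemLp g 2 (volume.restrict (Set.Ioi 0)))
    (ℓ : ℕ) (i j : Fin (ℓ + 1)) :
    (∫ t in Set.Ioi (0:ℝ),
        (∫ τ in (0:ℝ)..t, g (t - τ) * laguerreFun' (j : ℕ) τ) * laguerreFun' (i : ℕ) t)
      = if (i : ℕ) < (j : ℕ) then 0 else laguerreCoefDot g ((i : ℕ) - (j : ℕ)) := by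
  exact main_aux g hg1 (i : ℕ) (j : ℕ)
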